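/- Let V be a type and F a simple graph multifunction on V. If the multifunction v ↦ F^{2∪}(v) is connected, then F is connected and F is not bipartite. -/
import Mathlib


/-- The union image `S_F` of a multifunction. -/
def unionImage {V : Type*} (F : V → Set V) (A : Set V) : Set V := ⋃ a ∈ A, F a

/-- The `n`-th union iterate `F^{n∪}(v) = S_F^[n] {v}`. -/
def iterUnion {V : Type*} (F : V → Set V) (n : ℕ) (v : V) : Set V :=
  (unionImage F)^[n] {v}

/-- A multifunction is connected if every two vertices are joined by some walk
of positive length. -/
def ConnectedMF {V : Type*} (G : V → Set V) : Prop :=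
  ∀ u w : V, ∃ n ≥ 1, u ∈ iterUnion G n w

/-- The complete preimage `F_-(B) = {x | F(x) ∩ B ≠ ∅}`. -/
def preimMF {V : Type*} (F : V → Set V) (B : Set V) : Set V :=
  {x | (F x ∩ B).Nonempty}

/-- A set is independent for `F` if `U ∩ F_-(U) = ∅`. -/
def IndepMF {V : Type*} (F : V → Set V) (U : Set V) : Prop :=
  U ∩ preimMF F U = ∅

/-- `F` is bipartite if `V` splits into two nonempty disjoint independent sets. -/
def BipartiteMF {V : Type*} (F : V → Set V) : Prop :=
  ∃ U W : Set V, U.Nonempty ∧ W.Nonempty ∧ IndepMF F U ∧ IndepMF F W ∧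
    U ∪ W = Set.univ ∧ U ∩ W = ∅

/-- `F` is a simple graph multifunction: loopless and undirected. -/
def SimpleGraphMF {V : Type*} (F : V → Set V) : Prop :=
  (∀ v, v ∉ F v) ∧ (∀ u v, u ∈ F v ↔ v ∈ F u)


lemma iterUnion_succ' {V : Type*} (F : V → Set V) (n : ℕ) (v : V) :
    iterUnion F (n+1) v = unionImage F (iterUnion F n v) := by
  simp [iterUnion, Function.iterate_succ_apply']

lemma iter2 {V : Type*} (F : V → Set V) (n : ℕ) (v : V) :
    iterUnion (fun v => iterUnion F 2 v) n v = iterUnion F (2*n) v := by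
  induction n with
  | zero => simp [iterUnion]
  | succ n ih =>
      have h : 2*(n+1) = (2*n + 1) + 1 := by ring
      rw [iterUnion_succ', ih, h, iterUnion_succ', iterUnion_succ']
      have h2 : ∀ a : V, iterUnion F 2 a = unionImage F (F a) := by
        intro a
        rw [show (2:ℕ) = 1 + 1 from rfl, iterUnion_succ']
        simp [iterUnion, unionImage]
      simp only [unionImage, h2]
      ext x; simp [unionImage]

lemma indep_step {V : Type*} {F : V → Set V} {W U A : Set V}
    (hW : IndepMF F W) (huniv : U ∪ W = Set.univ) (hA : A ⊆ W) :
    unionImage F A ⊆ U := by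
  intro x hx
  simp only [unionImage, Set.mem_iUnion] at hx
  obtain ⟨a, ha, hxa⟩ := hx
  by_contra hxU
  have hxW : x ∈ W := by
    have := Set.eq_univ_iff_forall.mp huniv x
    rcases this with h | h
    · exact absurd h hxU
    · exact h
  have : a ∈ W ∩ preimMF F W := ⟨hA ha, ⟨x, hxa, hxW⟩⟩
  rw [hW] at this
  exact this

/-- If `F^{2∪}` is connected then `F` is connected and not bipartite. -/
theorem stmt_9 {V : Type*} (F : V → Set V)
    (hsg : SimpleGraphMF F)
    (hconn2 : ConnectedMF (fun v => iterUnion F 2 v)) :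
    ConnectedMF F ∧ ¬ BipartiteMF F := by
  constructor
  · intro u w
    obtain ⟨n, hn, hu⟩ := hconn2 u w
    rw [iter2] at hu
    exact ⟨2*n, by omega, hu⟩
  · rintro ⟨U, W, ⟨u, hu⟩, ⟨w, hw⟩, hIU, hIW, huniv, hdisj⟩
    have huniv' : W ∪ U = Set.univ := by rw [Set.union_comm]; exact huniv
    have key : ∀ n, iterUnion F (2*n) w ⊆ W := by
      intro n
      induction n with
      | zero => simp [iterUnion]; exact hw
      | succ n ih =>
          have h : 2*(n+1) = (2*n + 1) + 1 := by ring
          rw [h, iterUnion_succ', iterUnion_succ']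
          exact indep_step hIU huniv' (indep_step hIW huniv ih)
    obtain ⟨n, hn, humem⟩ := hconn2 u w
    rw [iter2] at humem
    have : u ∈ U ∩ W := ⟨hu, key n humem⟩
    rw [hdisj] at this
    exact this
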